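/- (Theorem 2) Let n ≥ 1, let (x_i, y_i) ∈ ℝ² and E_i ≥ 0 for i = 1, …, n, let d_max > 0, and let z > 0 satisfy z > √3 · d_max. Let D ⊆ ℝ² be a convex set such that for every (X, Y) ∈ D and every i, sqrt((X − x_i)² + (Y − y_i)²) < d_max. Then the function F(X, Y) = Σ_{i=1}^n E_i / ((X − x_i)² + (Y − y_i)² + z²) is concave on D. -/

import Mathlib

set_option maxHeartbeats 1000000

/-- Sum of concave functions is concave. -/
lemma concaveOn_finset_sum {ι : Type*} (t : Finset ι) {D : Set (ℝ × ℝ)}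
    (hD : Convex ℝ D) (f : ι → ℝ × ℝ → ℝ)
    (h : ∀ i ∈ t, ConcaveOn ℝ D (f i)) :
    ConcaveOn ℝ D (fun p => ∑ i ∈ t, f i p) := by
  classical
  induction t using Finset.induction_on with
  | empty => simpa using concaveOn_const (0 : ℝ) hD
  | @insert a s hi ih =>
    simp only [Finset.sum_insert hi]
    exact (h a (Finset.mem_insert_self a s)).add
      (ih fun i hi' => h i (Finset.mem_insert_of_mem hi'))

/-- Key scalar inequality. -/
lemma key_ineq (ra2 rb2 c z2 dmax : ℝ) (hra : 0 ≤ ra2) (hrb : 0 ≤ rb2)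
    (hc : 0 ≤ c) (hra' : ra2 < dmax ^ 2) (hrb' : rb2 < dmax ^ 2)
    (hz : 3 * dmax ^ 2 < z2)
    (hcs : (ra2 - rb2) ^ 2 ≤ c * (2 * ra2 + 2 * rb2 - c))
    (s t : ℝ) (hs : 0 ≤ s) (ht : 0 ≤ t) (hst : s + t = 1) :
    ((ra2 + z2) - (rb2 + z2)) ^ 2 ≤ c * (s * (rb2 + z2) + t * (ra2 + z2)) := by
  have ht' : t = 1 - s := by linarith
  subst ht'
  have h1 : 2 * ra2 + 2 * rb2 - c ≤ s * (rb2 + z2) + (1 - s) * (ra2 + z2) := by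
    rcases le_total ra2 rb2 with h | h
    · nlinarith [mul_nonneg hs (sub_nonneg.2 h)]
    · nlinarith [mul_nonneg ht (sub_nonneg.2 h)]
  nlinarith [mul_le_mul_of_nonneg_left h1 hc]

/-- Each individual term is concave. -/
lemma term_concave (qx qy dmax z Ei : ℝ) (hEi : 0 ≤ Ei) (hdmax : 0 < dmax)
    (hz : 0 < z) (hz3 : 3 * dmax ^ 2 < z ^ 2)
    (D : Set (ℝ × ℝ)) (hD : Convex ℝ D)
    (hdist : ∀ p ∈ D, Real.sqrt ((p.1 - qx) ^ 2 + (p.2 - qy) ^ 2) < dmax) :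
    ConcaveOn ℝ D (fun p : ℝ × ℝ => Ei / ((p.1 - qx) ^ 2 + (p.2 - qy) ^ 2 + z ^ 2)) := by
  refine ⟨hD, fun a ha b hb s t hs ht hst => ?_⟩
  have ht' : t = 1 - s := by linarith
  subst ht'
  have hda : (a.1 - qx) ^ 2 + (a.2 - qy) ^ 2 < dmax ^ 2 := by
    have h := hdist a ha
    have hnn : 0 ≤ (a.1 - qx) ^ 2 + (a.2 - qy) ^ 2 := by positivity
    nlinarith [Real.sq_sqrt hnn, Real.sqrt_nonneg ((a.1 - qx) ^ 2 + (a.2 - qy) ^ 2)]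
  have hdb : (b.1 - qx) ^ 2 + (b.2 - qy) ^ 2 < dmax ^ 2 := by
    have h := hdist b hb
    have hnn : 0 ≤ (b.1 - qx) ^ 2 + (b.2 - qy) ^ 2 := by positivity
    nlinarith [Real.sq_sqrt hnn, Real.sqrt_nonneg ((b.1 - qx) ^ 2 + (b.2 - qy) ^ 2)]
  set ra2 := (a.1 - qx) ^ 2 + (a.2 - qy) ^ 2 with hra2
  set rb2 := (b.1 - qx) ^ 2 + (b.2 - qy) ^ 2 with hrb2
  set c := (a.1 - b.1) ^ 2 + (a.2 - b.2) ^ 2 with hcdef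
  have hra : 0 ≤ ra2 := by rw [hra2]; positivity
  have hrb : 0 ≤ rb2 := by rw [hrb2]; positivity
  have hcnn : 0 ≤ c := by rw [hcdef]; positivity
  have hA : 0 < ra2 + z ^ 2 := by positivity
  have hB : 0 < rb2 + z ^ 2 := by positivity
  have hc4 : c < 4 * dmax ^ 2 := by
    rw [hcdef]
    nlinarith [sq_nonneg ((a.1 - qx) + (b.1 - qx)), sq_nonneg ((a.2 - qy) + (b.2 - qy)),
      hda, hdb]
  have hst4 : s * (1 - s) ≤ 1 / 4 := by nlinarith [sq_nonneg (s - (1 - s))]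
  have hzc : s * (1 - s) * c ≤ dmax ^ 2 := by
    nlinarith [mul_nonneg hs ht]
  have hEd : 0 < s * (ra2 + z ^ 2) + (1 - s) * (rb2 + z ^ 2) - s * (1 - s) * c := by
    nlinarith [mul_nonneg hs hra, mul_nonneg ht hrb]
  have hcs : (ra2 - rb2) ^ 2 ≤ c * (2 * ra2 + 2 * rb2 - c) := by
    rw [hra2, hrb2, hcdef]
    nlinarith [sq_nonneg ((a.1 - qx + (b.1 - qx)) * (a.2 - b.2) -
      (a.2 - qy + (b.2 - qy)) * (a.1 - b.1))]
  have hkey := key_ineq ra2 rb2 c (z ^ 2) dmax hra hrb hcnn hda hdb hz3 hcs s (1 - s) hs ht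
    (by ring)
  have hcomb : ((s • a + (1 - s) • b).1 - qx) ^ 2 + ((s • a + (1 - s) • b).2 - qy) ^ 2 + z ^ 2
      = s * (ra2 + z ^ 2) + (1 - s) * (rb2 + z ^ 2) - s * (1 - s) * c := by
    simp only [Prod.smul_fst, Prod.smul_snd, Prod.fst_add, Prod.snd_add, smul_eq_mul,
      hra2, hrb2, hcdef]
    ring
  show s • (Ei / (ra2 + z ^ 2)) + (1 - s) • (Ei / (rb2 + z ^ 2))
      ≤ Ei / (((s • a + (1 - s) • b).1 - qx) ^ 2 + ((s • a + (1 - s) • b).2 - qy) ^ 2 + z ^ 2)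
  rw [hcomb]
  simp only [smul_eq_mul]
  rw [le_div_iff₀ hEd]
  have hmain : (s * Ei * (rb2 + z ^ 2) + (1 - s) * Ei * (ra2 + z ^ 2)) *
      (s * (ra2 + z ^ 2) + (1 - s) * (rb2 + z ^ 2) - s * (1 - s) * c)
      ≤ Ei * ((ra2 + z ^ 2) * (rb2 + z ^ 2)) := by
    linear_combination mul_nonneg (mul_nonneg (mul_nonneg hs ht) hEi) (sub_nonneg.2 hkey)
  calc (s * (Ei / (ra2 + z ^ 2)) + (1 - s) * (Ei / (rb2 + z ^ 2))) *
        (s * (ra2 + z ^ 2) + (1 - s) * (rb2 + z ^ 2) - s * (1 - s) * c)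
      = ((s * Ei * (rb2 + z ^ 2) + (1 - s) * Ei * (ra2 + z ^ 2)) *
        (s * (ra2 + z ^ 2) + (1 - s) * (rb2 + z ^ 2) - s * (1 - s) * c)) /
        ((ra2 + z ^ 2) * (rb2 + z ^ 2)) := by
        field_simp
    _ ≤ Ei := by
        rw [div_le_iff₀ (by positivity)]
        nlinarith [hmain, mul_pos hA hB, hEi]

theorem stmt_6 (n : ℕ) (hn : 1 ≤ n) (x y E : Fin n → ℝ) (hE : ∀ i, 0 ≤ E i)
    (dmax : ℝ) (hdmax : 0 < dmax) (z : ℝ) (hz : 0 < z) (hz' : Real.sqrt 3 * dmax < z)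
    (D : Set (ℝ × ℝ)) (hD : Convex ℝ D)
    (hdist : ∀ p ∈ D, ∀ i : Fin n,
      Real.sqrt ((p.1 - x i) ^ 2 + (p.2 - y i) ^ 2) < dmax) :
    ConcaveOn ℝ D (fun p : ℝ × ℝ =>
      ∑ i : Fin n, E i / ((p.1 - x i) ^ 2 + (p.2 - y i) ^ 2 + z ^ 2)) := by
  have hz3 : 3 * dmax ^ 2 < z ^ 2 := by
    have h0 : 0 ≤ Real.sqrt 3 * dmax := by positivity
    have h := mul_self_lt_mul_self h0 hz'
    have h3 : Real.sqrt 3 * Real.sqrt 3 = 3 := Real.mul_self_sqrt (by norm_num)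
    nlinarith
  exact concaveOn_finset_sum Finset.univ hD _
    (fun i _ => term_concave (x i) (y i) dmax z (E i) (hE i) hdmax hz hz3 D hD
      (fun p hp => hdist p hp i))
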